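/- Let a ∈ ℝ and let D : [a, ∞) → ℝ be differentiable with D(u) → 0 as u → ∞. Suppose D′(u) = w(u)·(1 − R(u)) for all u ≥ a, where w(u) > 0 for all u ≥ a and R : [a, ∞) → ℝ is nondecreasing. If D(a) ≥ 0, then D(u) ≥ 0 for all u ≥ a. -/

import Mathlib

open Set Filter

/-- Monotone-ratio principle: let `D` be differentiable on `[a, ∞)` with `D(u) → 0` as
`u → ∞`, and suppose `D′(u) = w(u)(1 − R(u))` on `[a, ∞)` where `w > 0` and `R` is
nondecreasing on `[a, ∞)`. If `D(a) ≥ 0`, then `D(u) ≥ 0` for all `u ≥ a`. -/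
theorem stmt3
    (a : ℝ) (D w R : ℝ → ℝ)
    (hD : ∀ u ∈ Set.Ici a, HasDerivWithinAt D (w u * (1 - R u)) (Set.Ici a) u)
    (hlim : Tendsto D atTop (nhds 0))
    (hw : ∀ u ∈ Set.Ici a, 0 < w u)
    (hR : MonotoneOn R (Set.Ici a))
    (hDa : 0 ≤ D a) :
    ∀ u ∈ Set.Ici a, 0 ≤ D u := by
  intro u hu
  by_contra hneg
  push_neg at hneg
  have hcont : ContinuousOn D (Set.Ici a) := fun x hx => (hD x hx).continuousWithinAt
  rcases lt_or_ge (R u) 1 with hRu | hRu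
  · -- D' > 0 on [a, u], so D u ≥ D a ≥ 0, contradiction
    have hmono : MonotoneOn D (Set.Icc a u) := by
      apply monotoneOn_of_hasDerivWithinAt_nonneg (convex_Icc a u)
        (hcont.mono Icc_subset_Ici_self) (f' := fun x => w x * (1 - R x))
      · intro x hx
        rw [interior_Icc] at hx ⊢
        exact (hD x (le_of_lt hx.1)).mono (Ioo_subset_Icc_self.trans Icc_subset_Ici_self)
      · intro x hx
        rw [interior_Icc] at hx
        have hxa : x ∈ Set.Ici a := le_of_lt hx.1
        have : R x ≤ R u := hR hxa hu hx.2.le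
        nlinarith [hw x hxa]
    have := hmono (left_mem_Icc.mpr hu) (right_mem_Icc.mpr hu) hu
    linarith
  · -- D' ≤ 0 on [u, ∞), so D v ≤ D u < 0 for v ≥ u, contradicting limit 0
    have hanti : AntitoneOn D (Set.Ici u) := by
      apply antitoneOn_of_hasDerivWithinAt_nonpos (convex_Ici u)
        (hcont.mono (Ici_subset_Ici.mpr hu)) (f' := fun x => w x * (1 - R x))
      · intro x hx
        rw [interior_Ici] at hx ⊢
        exact (hD x (le_trans (α := ℝ) hu hx.le)).mono ((Ioi_subset_Ici_self).trans (Ici_subset_Ici.mpr hu))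
      · intro x hx
        rw [interior_Ici] at hx
        have hxa : x ∈ Set.Ici a := le_trans (α := ℝ) hu hx.le
        have : R u ≤ R x := hR hu hxa hx.le
        nlinarith [hw x hxa]
    have hev : ∀ᶠ v in atTop, D v ≤ D u := by
      filter_upwards [eventually_ge_atTop u] with v hv
      exact hanti self_mem_Ici hv hv
    exact absurd (le_of_tendsto hlim hev) (not_le.mpr hneg)
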